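/- Let C be a nonempty bounded closed convex subset of a real Hilbert space H and let A : C → H be an α-inverse strongly monotone mapping (α > 0). Then the solution set Ω of the variational inequality VI(C, A) is nonempty: there exists x ∈ C such that ⟨Ax, y − x⟩ ≥ 0 for all y ∈ C. -/

import Mathlib

open scoped RealInnerProductSpace
open Filter Topology
section Aux
variable {H : Type*} [NormedAddCommGroup H] [InnerProductSpace ℝ H]

/-- Projection onto a nonempty closed convex set: existence + variational characterization. -/
lemma vi_proj_exists [CompleteSpace H] {C : Set H} (hne : C.Nonempty) (hcl : IsClosed C)
    (hcv : Convex ℝ C) (u : H) : ∃ p ∈ C, ∀ y ∈ C, ⟪u - p, y - p⟫ ≤ 0 := by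
  obtain ⟨p, hp, hmin⟩ := exists_norm_eq_iInf_of_complete_convex hne hcl.isComplete hcv u
  exact ⟨p, hp, (norm_eq_iInf_iff_real_inner_le_zero hcv hp).mp hmin⟩

/-- Nonexpansiveness from the variational characterization. -/
lemma vi_nonexp {u v p q : H} (h1 : ⟪u - p, q - p⟫ ≤ 0) (h2 : ⟪v - q, p - q⟫ ≤ 0) :
    ‖p - q‖ ≤ ‖u - v‖ := by
  have key : ‖p - q‖ ^ 2 ≤ ⟪u - v, p - q⟫ := by
    have h1' : ⟪p - u, p - q⟫ ≤ 0 := by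
      have : ⟪p - u, p - q⟫ = ⟪u - p, q - p⟫ := by
        rw [← inner_neg_neg (𝕜 := ℝ), neg_sub, neg_sub]
      linarith [this ▸ h1]
    have expand : ⟪u - v, p - q⟫ = ‖p - q‖ ^ 2 - ⟪p - u, p - q⟫ - ⟪v - q, p - q⟫ := by
      rw [← @real_inner_self_eq_norm_sq]
      rw [← inner_sub_left, ← inner_sub_left]
      congr 1
      abel
    linarith
  have cs : ⟪u - v, p - q⟫ ≤ ‖u - v‖ * ‖p - q‖ := real_inner_le_norm _ _
  nlinarith [norm_nonneg (p - q), norm_nonneg (u - v)]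

/-- `I - α A` is nonexpansive on pairs where the ISM inequality holds. -/
lemma vi_S_nonexp {α : ℝ} (hα : 0 < α) {x y ax ay : H}
    (h : ⟪ax - ay, x - y⟫ ≥ α * ‖ax - ay‖ ^ 2) :
    ‖(x - α • ax) - (y - α • ay)‖ ≤ ‖x - y‖ := by
  have hrw : (x - α • ax) - (y - α • ay) = (x - y) - α • (ax - ay) := by
    rw [smul_sub]; abel
  rw [hrw]
  have hsq : ‖(x - y) - α • (ax - ay)‖ ^ 2 ≤ ‖x - y‖ ^ 2 := by
    rw [norm_sub_sq_real]
    rw [real_inner_smul_right, norm_smul, Real.norm_eq_abs, abs_of_pos hα]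
    have hc : ⟪x - y, ax - ay⟫ = ⟪ax - ay, x - y⟫ := real_inner_comm _ _
    have hn : ‖α • (ax - ay)‖ = α * ‖ax - ay‖ := by
      rw [norm_smul, Real.norm_eq_abs, abs_of_pos hα]
    nlinarith [norm_nonneg (ax - ay), sq_nonneg (α * ‖ax - ay‖)]
  calc ‖x - y - α • (ax - ay)‖ = Real.sqrt (‖x - y - α • (ax - ay)‖ ^ 2) := (Real.sqrt_sq (norm_nonneg _)).symm
    _ ≤ Real.sqrt (‖x - y‖ ^ 2) := Real.sqrt_le_sqrt hsq
    _ = ‖x - y‖ := Real.sqrt_sq (norm_nonneg _)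
end Aux
section Aux2
variable {H : Type*} [NormedAddCommGroup H] [InnerProductSpace ℝ H] [CompleteSpace H]

noncomputable def viEmbed (x : H) : WeakDual ℝ H :=
  StrongDual.toWeakDual (InnerProductSpace.toDual ℝ H x)

lemma viEmbed_apply (x v : H) : viEmbed x v = ⟪x, v⟫ := rfl

lemma vi_weak_compact {C : Set H} (hne : C.Nonempty) (hcl : IsClosed C)
    (hcv : Convex ℝ C) (hbd : Bornology.IsBounded C) :
    IsCompact (viEmbed '' C) := by
  have himg : viEmbed '' C
      = StrongDual.toWeakDual '' ((InnerProductSpace.toDual ℝ H) '' C) := by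
    rw [Set.image_image]; rfl
  apply WeakDual.isCompact_of_bounded_of_closed
  · -- boundedness of the preimage under toWeakDual
    rw [himg, ← WeakDual.isBounded_toWeakDual_preimage_iff_isBounded, Set.preimage_image_eq _ (StrongDual.toWeakDual (𝕜 := ℝ) (E := H)).injective]
    obtain ⟨R, hR⟩ := Bornology.IsBounded.exists_norm_le hbd
    refine (isBounded_iff_forall_norm_le).mpr ⟨R, ?_⟩
    rintro - ⟨x, hx, rfl⟩
    rw [LinearIsometryEquiv.norm_map]
    exact hR x hx
  · -- weak-* closedness
    rw [← isOpen_compl_iff, isOpen_iff_mem_nhds]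
    intro φ hφ
    set u : H := (InnerProductSpace.toDual ℝ H).symm (WeakDual.toStrongDual φ) with hu_def
    have hφu : viEmbed u = φ := by
      simp only [viEmbed, hu_def, LinearIsometryEquiv.apply_symm_apply]
      exact LinearEquiv.apply_symm_apply _ _
    have hu : u ∉ C := fun h => hφ ⟨u, h, hφu⟩
    obtain ⟨p, hp, hchar⟩ := vi_proj_exists hne hcl hcv u
    set v : H := u - p with hv_def
    have hvpos : 0 < ‖v‖ := by
      rw [norm_pos_iff]
      intro h0
      exact hu (by rwa [sub_eq_zero.mp h0])
    set c : ℝ := ⟪p, v⟫ with hc_def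
    have hφv : c < φ v := by
      have : φ v = ⟪u, v⟫ := by rw [← hφu]; rfl
      rw [this]
      have : ⟪u, v⟫ - ⟪p, v⟫ = ‖v‖ ^ 2 := by
        rw [← inner_sub_left, ← hv_def, real_inner_self_eq_norm_sq]
      nlinarith
    refine Filter.mem_of_superset
      ((isOpen_Ioi.preimage (WeakDual.eval_continuous v)).mem_nhds hφv) ?_
    rintro ψ (hψ : c < ψ v) ⟨y, hy, rfl⟩
    have h1 : ⟪u - p, y - p⟫ ≤ 0 := hchar y hy
    have h2 : viEmbed y v = ⟪y, v⟫ := rfl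
    rw [h2] at hψ
    have : ⟪y, v⟫ - c = ⟪u - p, y - p⟫ := by
      rw [hc_def, ← inner_sub_left, hv_def, real_inner_comm]
    linarith
end Aux2
section Aux3
variable {H : Type*} [NormedAddCommGroup H] [InnerProductSpace ℝ H] [CompleteSpace H]

lemma vi_fixedpoint {C : Set H} (hne : C.Nonempty) (hcl : IsClosed C) (hcv : Convex ℝ C)
    {α : ℝ} (hα : 0 < α) {A : H → H}
    (hA : ∀ x ∈ C, ∀ y ∈ C, ⟪A x - A y, x - y⟫ ≥ α * ‖A x - A y‖ ^ 2)
    {u₀ : H} (hu₀ : u₀ ∈ C) {t : ℝ} (ht0 : 0 < t) (ht1 : t ≤ 1) :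
    ∃ x ∈ C, ∀ y ∈ C, α * ⟪A x, y - x⟫ ≥ t * ⟪u₀ - x + α • A x, y - x⟫ := by
  classical
  choose P hPmem hPchar using vi_proj_exists hne hcl hcv
  haveI := hne.to_subtype
  haveI : CompleteSpace C := hcl.completeSpace_coe
  set S : H → H := fun w => (1 - t) • (w - α • A w) + t • u₀ with hS_def
  set g : C → C := fun x => ⟨P (S x), hPmem _⟩ with hg_def
  have hlip : ∀ x y : C, dist (g x) (g y) ≤ (1 - t) * dist x y := by
    intro x y
    have h1 : ⟪S x - P (S x), P (S y) - P (S x)⟫ ≤ 0 := hPchar (S x) _ (hPmem (S y))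
    have h2 : ⟪S y - P (S y), P (S x) - P (S y)⟫ ≤ 0 := hPchar (S y) _ (hPmem (S x))
    have hne1 : ‖P (S x) - P (S y)‖ ≤ ‖S (x : H) - S (y : H)‖ := vi_nonexp h1 h2
    have hSdiff : S (x : H) - S (y : H)
        = (1 - t) • (((x : H) - α • A x) - ((y : H) - α • A y)) := by
      simp only [hS_def, smul_sub]
      abel
    have hSle : ‖S (x : H) - S (y : H)‖ ≤ (1 - t) * ‖(x : H) - (y : H)‖ := by
      rw [hSdiff, norm_smul, Real.norm_eq_abs, abs_of_nonneg (by linarith)]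
      exact mul_le_mul_of_nonneg_left
        (vi_S_nonexp hα (hA x x.2 y y.2)) (by linarith)
    have : dist (g x) (g y) = ‖P (S x) - P (S y)‖ := by
      rw [Subtype.dist_eq, dist_eq_norm]
    rw [this, Subtype.dist_eq, dist_eq_norm]
    exact hne1.trans hSle
  set K : NNReal := Real.toNNReal (1 - t) with hK_def
  have hKcoe : (K : ℝ) = 1 - t := Real.coe_toNNReal _ (by linarith)
  have hcontr : ContractingWith K g := by
    constructor
    · rw [← NNReal.coe_lt_coe, hKcoe, NNReal.coe_one]; linarith
    · exact LipschitzWith.of_dist_le_mul (fun x y => by rw [hKcoe]; exact hlip x y)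
  set x : C := ContractingWith.fixedPoint g hcontr with hx_def
  have hfix : g x = x := hcontr.fixedPoint_isFixedPt
  have hval : P (S x) = (x : H) := congrArg Subtype.val hfix
  refine ⟨(x : H), x.2, fun y hy => ?_⟩
  have hch : ⟪S (x : H) - (x : H), y - (x : H)⟫ ≤ 0 := by
    have := hPchar (S x) y hy
    rwa [hval] at this
  have hrw : S (x : H) - (x : H)
      = -(α • A (x : H)) + t • (u₀ - (x : H) + α • A (x : H)) := by
    simp only [hS_def, sub_smul, smul_sub, one_smul, smul_add]
    abel
  rw [hrw, inner_add_left, inner_neg_left, real_inner_smul_left, real_inner_smul_left] at hch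
  linarith
end Aux3
set_option maxHeartbeats 1000000 in
theorem stmt_7
    {H : Type*} [NormedAddCommGroup H] [InnerProductSpace ℝ H] [CompleteSpace H]
    (C : Set H) (hCne : C.Nonempty) (hCcl : IsClosed C) (hCcv : Convex ℝ C) (hCbd : Bornology.IsBounded C)
    (α : ℝ) (hα : 0 < α) (A : H → H)
    (hA : ∀ x ∈ C, ∀ y ∈ C, ⟪A x - A y, x - y⟫ ≥ α * ‖A x - A y‖ ^ 2) :
    ∃ x ∈ C, ∀ y ∈ C, ⟪A x, y - x⟫ ≥ 0 := by
  classical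
  obtain ⟨u₀, hu₀⟩ := hCne
  obtain ⟨R, hR⟩ := Bornology.IsBounded.exists_norm_le hCbd
  have hR0 : 0 ≤ R := le_trans (norm_nonneg u₀) (hR u₀ hu₀)
  -- A is (1/α)-Lipschitz on C (stated multiplied by α)
  have hLip : ∀ x ∈ C, ∀ y ∈ C, α * ‖A x - A y‖ ≤ ‖x - y‖ := by
    intro x hx y hy
    have h1 := hA x hx y hy
    have h2 : ⟪A x - A y, x - y⟫ ≤ ‖A x - A y‖ * ‖x - y‖ := real_inner_le_norm _ _
    rcases eq_or_lt_of_le (norm_nonneg (A x - A y)) with h0 | hpos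
    · rw [← h0, mul_zero]; exact norm_nonneg _
    · nlinarith
  have hdiam : ∀ x ∈ C, ∀ y ∈ C, ‖x - y‖ ≤ 2 * R := by
    intro x hx y hy
    calc ‖x - y‖ ≤ ‖x‖ + ‖y‖ := norm_sub_le _ _
      _ ≤ 2 * R := by linarith [hR x hx, hR y hy]
  set KA : ℝ := α * ‖A u₀‖ + 2 * R with hKA_def
  have hKA0 : 0 ≤ KA := by
    have := norm_nonneg (A u₀); nlinarith
  have hKA : ∀ x ∈ C, α * ‖A x‖ ≤ KA := by
    intro x hx
    have h1 := hLip x hx u₀ hu₀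
    have h2 : ‖A x‖ ≤ ‖A x - A u₀‖ + ‖A u₀‖ := by
      have : A x = (A x - A u₀) + A u₀ := by abel
      calc ‖A x‖ = ‖(A x - A u₀) + A u₀‖ := by rw [← this]
        _ ≤ ‖A x - A u₀‖ + ‖A u₀‖ := norm_add_le _ _
    have h3 := hdiam x hx u₀ hu₀
    rw [hKA_def]
    nlinarith
  set M : ℝ := (2 * R + KA) * (2 * R) with hM_def
  have hM0 : 0 ≤ M := by nlinarith
  -- approximate solutions
  have key : ∀ n : ℕ, ∃ x ∈ C, ∀ y ∈ C,
      ⟪A y, y - x⟫ ≥ -((1/((n:ℝ)+1)) * (M/α)) := by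
    intro n
    have ht0 : (0:ℝ) < 1/((n:ℝ)+1) := by positivity
    have ht1 : (1:ℝ)/((n:ℝ)+1) ≤ 1 := by
      rw [div_le_one (by positivity)]
      linarith [Nat.cast_nonneg (α := ℝ) n]
    obtain ⟨x, hxC, hx⟩ := vi_fixedpoint ⟨u₀, hu₀⟩ hCcl hCcv hα hA hu₀ ht0 ht1
    refine ⟨x, hxC, fun y hy => ?_⟩
    have h1 := hx y hy
    set t : ℝ := 1/((n:ℝ)+1)
    -- bound the perturbation term
    have hw : ‖u₀ - x + α • A x‖ ≤ 2 * R + KA := by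
      calc ‖u₀ - x + α • A x‖ ≤ ‖u₀ - x‖ + ‖α • A x‖ := norm_add_le _ _
        _ ≤ 2 * R + KA := by
            rw [norm_smul, Real.norm_eq_abs, abs_of_pos hα]
            linarith [hdiam u₀ hu₀ x hxC, hKA x hxC]
    have hyx : ‖y - x‖ ≤ 2 * R := hdiam y hy x hxC
    have hwbound : ⟪u₀ - x + α • A x, y - x⟫ ≥ -M := by
      have habs := abs_real_inner_le_norm (u₀ - x + α • A x) (y - x)
      have hmm : ‖u₀ - x + α • A x‖ * ‖y - x‖ ≤ M := by
        rw [hM_def]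
        exact mul_le_mul hw hyx (norm_nonneg _) (by linarith)
      have hnl := neg_abs_le ⟪u₀ - x + α • A x, y - x⟫
      linarith
    -- α ⟪A x, y - x⟫ ≥ -(t * M)
    have h4 : α * ⟪A x, y - x⟫ ≥ -(t * M) := by
      have h5 : t * ⟪u₀ - x + α • A x, y - x⟫ ≥ t * (-M) :=
        mul_le_mul_of_nonneg_left hwbound (le_of_lt ht0)
      have := ge_trans h1 (by linarith : t * ⟪u₀ - x + α • A x, y - x⟫ ≥ -(t * M))
      exact this
    have h5 : -(t * (M/α)) ≤ ⟪A x, y - x⟫ := by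
      rw [show -(t*(M/α)) = (-(t*M))/α by ring, div_le_iff₀ hα]
      nlinarith
    -- monotonicity of A
    have h6 : (0:ℝ) ≤ ⟪A y - A x, y - x⟫ := by
      have := hA y hy x hxC
      nlinarith [sq_nonneg ‖A y - A x‖]
    have h7 : ⟪A y, y - x⟫ = ⟪A y - A x, y - x⟫ + ⟪A x, y - x⟫ := by
      rw [inner_sub_left]; ring
    rw [ge_iff_le, h7]
    linarith
  choose xseq hxC hxineq using key
  -- weak cluster point
  have hKcpt := vi_weak_compact ⟨u₀, hu₀⟩ hCcl hCcv hCbd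
  have hmaps : Filter.map (fun n => viEmbed (xseq n)) atTop ≤ 𝓟 (viEmbed '' C) := by
    rw [Filter.le_principal_iff, Filter.mem_map]
    exact Filter.Eventually.of_forall (fun n => Set.mem_image_of_mem _ (hxC n))
  obtain ⟨φ, hφD, hclu⟩ := hKcpt.exists_mapClusterPt hmaps
  obtain ⟨x, hxmem, rfl⟩ := hφD
  refine ⟨x, hxmem, ?_⟩
  -- Minty-type property of x
  have hMinty : ∀ y ∈ C, (0:ℝ) ≤ ⟪A y, y - x⟫ := by
    intro y hy
    by_contra hcon
    push_neg at hcon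
    set ε : ℝ := -⟪A y, y - x⟫ / 2 with hε_def
    have hε0 : 0 < ε := by rw [hε_def]; linarith
    have hc : MapClusterPt (viEmbed x (A y)) atTop (fun n => viEmbed (xseq n) (A y)) :=
      hclu.continuousAt_comp (f := fun ψ : WeakDual ℝ H => ψ (A y)) (WeakDual.eval_continuous (A y)).continuousAt
    have hfreq : ∃ᶠ n : ℕ in atTop, |viEmbed (xseq n) (A y) - viEmbed x (A y)| < ε := by
      have := mapClusterPt_iff_frequently.mp hc (Metric.ball (viEmbed x (A y)) ε)
        (Metric.ball_mem_nhds _ hε0)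
      exact this.mono (fun n hn => by rwa [Metric.mem_ball, Real.dist_eq] at hn)
    have hev : ∀ᶠ n : ℕ in atTop, (1/((n:ℝ)+1)) * (M/α) < ε := by
      have h2 : Filter.Tendsto (fun n : ℕ => (1/((n:ℝ)+1)) * (M/α)) atTop (𝓝 0) := by
        have := tendsto_one_div_add_atTop_nhds_zero_nat.mul_const (M/α)
        simpa using this
      exact h2.eventually (gt_mem_nhds hε0)
    obtain ⟨n, hn1, hn2⟩ := (hfreq.and_eventually hev).exists
    have h8 := hxineq n y hy
    have e1 : viEmbed x (A y) = ⟪A y, x⟫ := by rw [viEmbed_apply, real_inner_comm]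
    have e2 : viEmbed (xseq n) (A y) = ⟪A y, xseq n⟫ := by
      rw [viEmbed_apply, real_inner_comm]
    rw [e1, e2] at hn1
    have ex1 : ⟪A y, y - xseq n⟫ = ⟪A y, y⟫ - ⟪A y, xseq n⟫ := inner_sub_right _ _ _
    have ex2 : ⟪A y, y - x⟫ = ⟪A y, y⟫ - ⟪A y, x⟫ := inner_sub_right _ _ _
    obtain ⟨ha1, ha2⟩ := abs_lt.mp hn1
    rw [ex1] at h8
    rw [ex2] at hcon hε_def
    linarith
  -- Minty implies the variational inequality at x
  intro y hy
  have hbound : ∀ n : ℕ,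
      -((1/((n:ℝ)+1)) * (‖y - x‖^2 / α)) ≤ ⟪A x, y - x⟫ := by
    intro n
    set t : ℝ := 1/((n:ℝ)+1) with ht_def
    have ht0 : 0 < t := by positivity
    have ht1 : t ≤ 1 := by
      rw [ht_def, div_le_one (by positivity)]
      linarith [Nat.cast_nonneg (α := ℝ) n]
    set z : H := x + t • (y - x) with hz_def
    have hzC : z ∈ C := by
      have hmem := hCcv hxmem hy (by linarith : (0:ℝ) ≤ 1 - t) (le_of_lt ht0) (by ring)
      have heq : x + t • (y - x) = (1 - t) • x + t • y := by
        rw [smul_sub, sub_smul, one_smul]; abel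
      rw [hz_def, heq]; exact hmem
    have h1 : (0:ℝ) ≤ ⟪A z, z - x⟫ := hMinty z hzC
    have h2 : z - x = t • (y - x) := by rw [hz_def]; abel
    rw [h2, real_inner_smul_right] at h1
    have h3 : (0:ℝ) ≤ ⟪A z, y - x⟫ := by nlinarith
    have hxz : ‖x - z‖ = t * ‖y - x‖ := by
      have hxz' : x - z = -(t • (y - x)) := by rw [hz_def]; abel
      rw [hxz', norm_neg, norm_smul, Real.norm_eq_abs, abs_of_pos ht0]
    have h4 : α * ‖A x - A z‖ ≤ t * ‖y - x‖ := by
      rw [← hxz]; exact hLip x hxmem z hzC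
    have h5 : ⟪A x, y - x⟫ = ⟪A z, y - x⟫ + ⟪A x - A z, y - x⟫ := by
      rw [inner_sub_left]; ring
    have h6 := abs_real_inner_le_norm (A x - A z) (y - x)
    have h7 := neg_abs_le ⟪A x - A z, y - x⟫
    have h8 : ‖A x - A z‖ * ‖y - x‖ ≤ t * (‖y - x‖^2 / α) := by
      have hmul := mul_le_mul_of_nonneg_right h4 (norm_nonneg (y - x))
      rw [show t * (‖y - x‖^2/α) = (t * ‖y - x‖) * ‖y - x‖ / α by ring, le_div_iff₀ hα]
      linarith [hmul]
    linarith
  have hlim : Filter.Tendsto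
      (fun n : ℕ => -((1/((n:ℝ)+1)) * (‖y - x‖^2 / α))) atTop (𝓝 0) := by
    have := (tendsto_one_div_add_atTop_nhds_zero_nat.mul_const (‖y - x‖^2 / α)).neg
    simpa using this
  exact le_of_tendsto' hlim hbound
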